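/- If C is an irreducible Kolmogorov matrix with normalized positive right null vector k (Ck = 0, ∑k_i = 1), then for every probability vector u₀ (nonnegative entries summing to 1), e^{tC} u₀ converges to k as t → ∞. -/

import Mathlib

open Matrix

/-- A matrix is irreducible if there is no nontrivial subset `S` of indices with
`A i j = 0` for all `i ∈ S`, `j ∉ S`. -/
def MatIrreducible {n : ℕ} (A : Matrix (Fin n) (Fin n) ℝ) : Prop :=
  ¬ ∃ S : Set (Fin n), S.Nonempty ∧ Sᶜ.Nonempty ∧ ∀ i ∈ S, ∀ j ∉ S, A i j = 0

namespace KolmAux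

open NormedSpace

variable {n : ℕ}

/-- Entrywise HasSum for the matrix exponential. -/
theorem hasSum_exp_entry (A : Matrix (Fin n) (Fin n) ℝ) (i j : Fin n) :
    HasSum (fun m : ℕ => ((m.factorial : ℝ))⁻¹ * (A ^ m) i j) ((exp A) i j) := by
  letI : SeminormedRing (Matrix (Fin n) (Fin n) ℝ) := Matrix.linftyOpSemiNormedRing
  letI : NormedRing (Matrix (Fin n) (Fin n) ℝ) := Matrix.linftyOpNormedRing
  letI : NormedAlgebra ℝ (Matrix (Fin n) (Fin n) ℝ) := Matrix.linftyOpNormedAlgebra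
  have hs : Summable (fun m : ℕ => ((m.factorial : ℝ))⁻¹ • A ^ m) := expSeries_summable' A
  have h1 : HasSum (fun m : ℕ => ((m.factorial : ℝ))⁻¹ • A ^ m) (exp A) := by
    rw [exp_eq_tsum ℝ]; exact hs.hasSum
  let Φ : Matrix (Fin n) (Fin n) ℝ →L[ℝ] ℝ :=
    { toFun := fun M => M i j,
      map_add' := fun _ _ => rfl,
      map_smul' := fun _ _ => rfl,
      cont := (continuous_apply j).comp (continuous_apply i) }
  have h2 := h1.mapL Φ
  simp only [map_smul, smul_eq_mul] at h2
  exact h2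

/-- If `A.mulVec w = 0` then `exp(A).mulVec w = w`. -/
theorem exp_mulVec_of_mulVec_eq_zero (A : Matrix (Fin n) (Fin n) ℝ) (w : Fin n → ℝ)
    (h : A.mulVec w = 0) : (exp A).mulVec w = w := by
  letI : SeminormedRing (Matrix (Fin n) (Fin n) ℝ) := Matrix.linftyOpSemiNormedRing
  letI : NormedRing (Matrix (Fin n) (Fin n) ℝ) := Matrix.linftyOpNormedRing
  letI : NormedAlgebra ℝ (Matrix (Fin n) (Fin n) ℝ) := Matrix.linftyOpNormedAlgebra
  have hs : Summable (fun m : ℕ => ((m.factorial : ℝ))⁻¹ • A ^ m) := expSeries_summable' A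
  have h1 : HasSum (fun m : ℕ => ((m.factorial : ℝ))⁻¹ • A ^ m) (exp A) := by
    rw [exp_eq_tsum ℝ]; exact hs.hasSum
  let Φ : Matrix (Fin n) (Fin n) ℝ →L[ℝ] (Fin n → ℝ) :=
    { toFun := fun M => M.mulVec w,
      map_add' := fun M N => Matrix.add_mulVec M N w,
      map_smul' := fun c M => Matrix.smul_mulVec c M w,
      cont := by
        refine continuous_pi fun i => ?_
        show Continuous fun M : Matrix (Fin n) (Fin n) ℝ => ∑ j, M i j * w j
        exact continuous_finset_sum _ fun j _ =>
          (((continuous_apply_apply i j)).mul continuous_const) }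
  have h2 : HasSum (fun m : ℕ => ((m.factorial : ℝ))⁻¹ • (A ^ m).mulVec w) (Φ (exp A)) := by
    simpa [Φ] using h1.mapL Φ
  have hzero : ∀ m : ℕ, m ≠ 0 → ((m.factorial : ℝ))⁻¹ • (A ^ m).mulVec w = 0 := by
    intro m hm
    obtain ⟨m', rfl⟩ := Nat.exists_eq_succ_of_ne_zero hm
    rw [pow_succ, ← Matrix.mulVec_mulVec, h, Matrix.mulVec_zero, smul_zero]
  have h3 : HasSum (fun m : ℕ => ((m.factorial : ℝ))⁻¹ • (A ^ m).mulVec w) w := by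
    have := hasSum_single (f := fun m : ℕ => ((m.factorial : ℝ))⁻¹ • (A ^ m).mulVec w) 0 hzero
    simpa [Matrix.one_mulVec] using this
  have : Φ (exp A) = w := h2.unique h3
  simpa [Φ] using this

theorem pow_entry_nonneg {B : Matrix (Fin n) (Fin n) ℝ} (hB : ∀ i j, 0 ≤ B i j) :
    ∀ (m : ℕ) (i j), 0 ≤ (B ^ m) i j := by
  intro m
  induction m with
  | zero => intro i j; by_cases h : i = j <;> simp [h, Matrix.one_apply]
  | succ m ih =>
    intro i j
    rw [pow_succ, Matrix.mul_apply]
    exact Finset.sum_nonneg fun l _ => mul_nonneg (ih i l) (hB l j)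

theorem exp_entry_nonneg {B : Matrix (Fin n) (Fin n) ℝ} (hB : ∀ i j, 0 ≤ B i j) (i j : Fin n) :
    0 ≤ (exp B) i j :=
  (hasSum_exp_entry B i j).nonneg fun m =>
    mul_nonneg (by positivity) (pow_entry_nonneg hB m i j)

theorem exp_entry_pos {B : Matrix (Fin n) (Fin n) ℝ} (hB : ∀ i j, 0 ≤ B i j) (i j : Fin n)
    (m : ℕ) (hm : 0 < (B ^ m) i j) : 0 < (exp B) i j := by
  have h1 : ((m.factorial : ℝ))⁻¹ * (B ^ m) i j ≤ (exp B) i j :=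
    le_hasSum (hasSum_exp_entry B i j) m fun m' _ =>
      mul_nonneg (by positivity) (pow_entry_nonneg hB m' i j)
  have h2 : 0 < ((m.factorial : ℝ))⁻¹ * (B ^ m) i j := by positivity
  linarith

theorem exp_smul_one (r : ℝ) :
    exp (r • (1 : Matrix (Fin n) (Fin n) ℝ)) = Real.exp r • (1 : Matrix (Fin n) (Fin n) ℝ) := by
  letI : SeminormedRing (Matrix (Fin n) (Fin n) ℝ) := Matrix.linftyOpSemiNormedRing
  letI : NormedRing (Matrix (Fin n) (Fin n) ℝ) := Matrix.linftyOpNormedRing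
  letI : NormedAlgebra ℝ (Matrix (Fin n) (Fin n) ℝ) := Matrix.linftyOpNormedAlgebra
  have h1 : r • (1 : Matrix (Fin n) (Fin n) ℝ) = algebraMap ℝ (Matrix (Fin n) (Fin n) ℝ) r :=
    (Algebra.algebraMap_eq_smul_one r).symm
  rw [h1]; erw [← algebraMap_exp_comm r]; rw [Algebra.algebraMap_eq_smul_one, Real.exp_eq_exp_ℝ]

theorem reach {C B : Matrix (Fin n) (Fin n) ℝ} (hirr : MatIrreducible C)
    (hB : ∀ i j, 0 ≤ B i j) (hBC : ∀ i j, i ≠ j → B i j = C i j)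
    (j : Fin n) : ∀ i, ∃ m : ℕ, 0 < (B ^ m) i j := by
  by_contra hcon
  push_neg at hcon
  obtain ⟨i0, hi0⟩ := hcon
  set T : Set (Fin n) := {i | ∃ m : ℕ, 0 < (B ^ m) i j} with hT
  have hjT : j ∈ T := ⟨0, by simp [Matrix.one_apply]⟩
  have hi0T : i0 ∉ T := by
    intro ⟨m, hm⟩
    exact absurd hm (not_lt.mpr (hi0 m))
  refine hirr ⟨Tᶜ, ⟨i0, hi0T⟩, ⟨j, by simpa using hjT⟩, ?_⟩
  intro i hiTc l hlTc
  have hlT : l ∈ T := Set.not_notMem.mp hlTc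
  have hne : i ≠ l := fun h => hiTc (h ▸ hlT)
  obtain ⟨m, hm⟩ := hlT
  have hi_zero : ∀ m' : ℕ, (B ^ m') i j ≤ 0 := by
    intro m'
    by_contra hpos
    exact hiTc ⟨m', lt_of_not_ge hpos⟩
  have hsum : (B ^ (m + 1)) i j = ∑ p, B i p * (B ^ m) p j := by
    rw [pow_succ']; exact Matrix.mul_apply
  have hterm_nonneg : ∀ p ∈ Finset.univ, 0 ≤ B i p * (B ^ m) p j := fun p _ =>
    mul_nonneg (hB i p) (pow_entry_nonneg hB m p j)
  have hzero : ∑ p, B i p * (B ^ m) p j = 0 := by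
    have h1 : (B ^ (m + 1)) i j = 0 :=
      le_antisymm (hi_zero (m + 1)) (pow_entry_nonneg hB (m + 1) i j)
    rw [← hsum, h1]
  have hBil : B i l * (B ^ m) l j = 0 :=
    (Finset.sum_eq_zero_iff_of_nonneg hterm_nonneg).mp hzero l (Finset.mem_univ l)
  have : B i l = 0 := by
    rcases mul_eq_zero.mp hBil with h | h
    · exact h
    · exact absurd h (ne_of_gt hm)
  rw [← hBC i l hne]; exact this

theorem contract {P : Matrix (Fin n) (Fin n) ℝ} {δ : ℝ}
    (hδ : ∀ i j, δ ≤ P i j) (hcol : ∀ j, ∑ i, P i j = 1)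
    (v : Fin n → ℝ) (hv : ∑ j, v j = 0) :
    ∑ i, |P.mulVec v i| ≤ (1 - n * δ) * ∑ j, |v j| := by
  have key : ∀ i, |P.mulVec v i| ≤ ∑ j, (P i j - δ) * |v j| := by
    intro i
    have h1 : P.mulVec v i = ∑ j, (P i j - δ) * v j := by
      have : ∑ j, (P i j - δ) * v j = ∑ j, P i j * v j - δ * ∑ j, v j := by
        rw [Finset.mul_sum, ← Finset.sum_sub_distrib]
        congr 1; ext j; ring
      rw [this, hv, mul_zero, sub_zero]
      rfl
    rw [h1]
    refine (Finset.abs_sum_le_sum_abs _ _).trans ?_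
    refine Finset.sum_le_sum fun j _ => ?_
    rw [abs_mul, abs_of_nonneg (sub_nonneg.mpr (hδ i j))]
  calc ∑ i, |P.mulVec v i| ≤ ∑ i, ∑ j, (P i j - δ) * |v j| := Finset.sum_le_sum fun i _ => key i
    _ = ∑ j, (∑ i, (P i j - δ)) * |v j| := by
        rw [Finset.sum_comm]; congr 1; ext j; rw [Finset.sum_mul]
    _ = ∑ j, (1 - n * δ) * |v j| := by
        congr 1; ext j
        congr 1
        rw [Finset.sum_sub_distrib, hcol j, Finset.sum_const, Finset.card_univ, Fintype.card_fin,
          nsmul_eq_mul]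
    _ = (1 - n * δ) * ∑ j, |v j| := by rw [Finset.mul_sum]

theorem mulVec_sum_eq {P : Matrix (Fin n) (Fin n) ℝ} (hcol : ∀ j, ∑ i, P i j = 1)
    (v : Fin n → ℝ) : ∑ i, P.mulVec v i = ∑ j, v j := by
  have : ∑ i, P.mulVec v i = ∑ i, ∑ j, P i j * v j := rfl
  rw [this, Finset.sum_comm]
  congr 1; ext j
  rw [← Finset.sum_mul, hcol j, one_mul]

theorem exp_col_sum {A : Matrix (Fin n) (Fin n) ℝ} (h : ∀ j, ∑ i, A i j = 0) (j : Fin n) :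
    ∑ i, (exp A) i j = 1 := by
  have h1 : Aᵀ.mulVec (fun _ => (1 : ℝ)) = 0 := by
    funext i
    show ∑ p, Aᵀ i p * 1 = 0
    simp only [Matrix.transpose_apply, mul_one]
    exact h i
  have h2 : (exp Aᵀ).mulVec (fun _ => (1 : ℝ)) = fun _ => (1 : ℝ) :=
    exp_mulVec_of_mulVec_eq_zero _ _ h1
  have h3 : exp Aᵀ = (exp A)ᵀ := Matrix.exp_transpose A
  have h4 := congrFun h2 j
  rw [h3] at h4
  have h5 : ((exp A)ᵀ.mulVec fun _ => (1:ℝ)) j = ∑ i, (exp A) i j := by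
    show ∑ p, (exp A)ᵀ j p * 1 = _
    simp only [Matrix.transpose_apply, mul_one]
  rw [h5] at h4
  exact h4

end KolmAux

open KolmAux

/-- If `C` is an irreducible Kolmogorov matrix with normalized positive
right null vector `k`, then for every probability vector `u₀`, `e^{tC} u₀ → k` as
`t → ∞`. -/
theorem kolmogorov_exp_converges_to_stable_structure (n : ℕ) (hn : 0 < n)
    (C : Matrix (Fin n) (Fin n) ℝ)
    (hoff : ∀ i j, i ≠ j → 0 ≤ C i j)
    (hcol : ∀ j, ∑ i, C i j = 0)
    (hirr : MatIrreducible C)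
    (k : Fin n → ℝ)
    (hk : ∀ i, 0 < k i) (hCk : C.mulVec k = 0) (hksum : ∑ i, k i = 1)
    (u₀ : Fin n → ℝ) (hu₀ : ∀ i, 0 ≤ u₀ i) (hu₀sum : ∑ i, u₀ i = 1) :
    Filter.Tendsto (fun t : ℝ => (NormedSpace.exp (t • C)).mulVec u₀)
      Filter.atTop (nhds k) := by
  haveI : NeZero n := ⟨hn.ne'⟩
  set E : ℝ → Matrix (Fin n) (Fin n) ℝ := fun t => NormedSpace.exp (t • C) with hE
  set α : ℝ := 1 + ∑ p, |C p p| with hα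
  set B : Matrix (Fin n) (Fin n) ℝ := C + α • 1 with hB
  -- B is entrywise nonnegative
  have hαpos : ∀ i, 0 < C i i + α := by
    intro i
    have h1 : |C i i| ≤ ∑ p, |C p p| :=
      Finset.single_le_sum (f := fun p => |C p p|) (fun p _ => abs_nonneg _) (Finset.mem_univ i)
    have h2 := neg_abs_le (C i i)
    simp only [hα]
    linarith
  have hBnn : ∀ i j, 0 ≤ B i j := by
    intro i j
    by_cases h : i = j
    · subst h
      have : B i i = C i i + α := by
        simp [hB, Matrix.add_apply, Matrix.smul_apply, Matrix.one_apply, smul_eq_mul]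
      rw [this]; exact (hαpos i).le
    · have : B i j = C i j := by
        simp [hB, Matrix.add_apply, Matrix.smul_apply, Matrix.one_apply, h, smul_eq_mul]
      rw [this]; exact hoff i j h
  have hBC : ∀ i j, i ≠ j → B i j = C i j := by
    intro i j h
    simp [hB, Matrix.add_apply, Matrix.smul_apply, Matrix.one_apply, h, smul_eq_mul]
  -- factorization of E t
  have hEfact : ∀ t : ℝ, E t = Real.exp (-(t * α)) • NormedSpace.exp (t • B) := by
    intro t
    have hsplit : t • C = (-(t * α)) • (1 : Matrix (Fin n) (Fin n) ℝ) + t • B := by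
      rw [hB]; ext i j
      by_cases h : i = j <;>
        simp [Matrix.add_apply, Matrix.smul_apply, Matrix.one_apply, smul_eq_mul, h] <;> ring
    have hcomm : Commute ((-(t * α)) • (1 : Matrix (Fin n) (Fin n) ℝ)) (t • B) := by
      exact ((Commute.one_left B).smul_left _).smul_right _
    rw [hE]
    show NormedSpace.exp (t • C) = _
    rw [hsplit, Matrix.exp_add_of_commute _ _ hcomm, exp_smul_one, Matrix.smul_mul,
      Matrix.one_mul]
  -- nonnegativity for t ≥ 0
  have hEnn : ∀ t : ℝ, 0 ≤ t → ∀ i j, 0 ≤ E t i j := by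
    intro t ht i j
    have h1 : ∀ i j, 0 ≤ (t • B) i j := fun i j => by
      have := hBnn i j
      simp only [Matrix.smul_apply, smul_eq_mul]
      exact mul_nonneg ht this
    have h2 := exp_entry_nonneg h1 i j
    rw [hEfact t]
    simp only [Matrix.smul_apply, smul_eq_mul]
    exact mul_nonneg (Real.exp_nonneg _) h2
  -- column sums of E t are 1
  have hEcol : ∀ (t : ℝ) (j : Fin n), ∑ i, E t i j = 1 := by
    intro t j
    refine exp_col_sum (fun j' => ?_) j
    simp only [Matrix.smul_apply, smul_eq_mul, ← Finset.mul_sum, hcol j', mul_zero]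
  -- E t fixes k
  have hEk : ∀ t : ℝ, (E t).mulVec k = k := by
    intro t
    refine exp_mulVec_of_mulVec_eq_zero _ _ ?_
    rw [Matrix.smul_mulVec, hCk, smul_zero]
  -- positivity of E 1
  have hE1pos : ∀ i j, 0 < E 1 i j := by
    intro i j
    obtain ⟨m, hm⟩ := reach hirr hBnn hBC j i
    have h1 : 0 < NormedSpace.exp B i j := exp_entry_pos hBnn i j m hm
    have := hEfact 1
    rw [one_smul] at this
    rw [this]
    simp only [Matrix.smul_apply, smul_eq_mul]
    exact mul_pos (Real.exp_pos _) h1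
  -- the minimum entry δ of E 1
  have hne : (Finset.univ : Finset (Fin n × Fin n)).Nonempty := Finset.univ_nonempty
  set δ : ℝ := Finset.univ.inf' hne (fun p : Fin n × Fin n => E 1 p.1 p.2) with hδ
  have hδpos : 0 < δ := by
    rw [hδ, Finset.lt_inf'_iff]
    exact fun p _ => hE1pos p.1 p.2
  have hδle : ∀ i j, δ ≤ E 1 i j := fun i j =>
    Finset.inf'_le _ (Finset.mem_univ (i, j))
  set r : ℝ := 1 - n * δ with hr
  have hnδ : (n : ℝ) * δ ≤ 1 := by
    have j0 : Fin n := ⟨0, hn⟩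
    calc (n : ℝ) * δ = ∑ _i : Fin n, δ := by
          rw [Finset.sum_const, Finset.card_univ, Fintype.card_fin, nsmul_eq_mul]
      _ ≤ ∑ i, E 1 i j0 := Finset.sum_le_sum fun i _ => hδle i j0
      _ = 1 := hEcol 1 j0
  have hr0 : 0 ≤ r := by rw [hr]; linarith
  have hr1 : r < 1 := by
    have hn' : (0 : ℝ) < n := by exact_mod_cast hn
    rw [hr]; nlinarith
  -- the difference vector
  set v : Fin n → ℝ := fun i => u₀ i - k i with hv
  have hvsum : ∑ j, v j = 0 := by
    simp only [hv, Finset.sum_sub_distrib, hu₀sum, hksum, sub_self]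
  set g : ℝ → ℝ := fun t => ∑ i, |(E t).mulVec v i| with hg
  have hg0 : ∀ t : ℝ, ∑ i, (E t).mulVec v i = 0 := fun t => by
    rw [mulVec_sum_eq (hEcol t), hvsum]
  -- semigroup property
  have hsem : ∀ s t : ℝ, E (s + t) = E s * E t := by
    intro s t
    show NormedSpace.exp ((s + t) • C) = _
    rw [add_smul]
    exact Matrix.exp_add_of_commute _ _ (((Commute.refl C).smul_left s).smul_right t)
  -- geometric decay along naturals
  have step_nat : ∀ m : ℕ, g (m : ℝ) ≤ r ^ m * g 0 := by
    intro m
    induction m with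
    | zero => simp
    | succ m ih =>
      have hcast : ((m + 1 : ℕ) : ℝ) = 1 + (m : ℝ) := by push_cast; ring
      have hEm : E ((m + 1 : ℕ) : ℝ) = E 1 * E (m : ℝ) := by rw [hcast, hsem]
      have hgm : g ((m + 1 : ℕ) : ℝ) = ∑ i, |(E 1).mulVec ((E (m : ℝ)).mulVec v) i| := by
        rw [hg]
        simp only [hEm, Matrix.mulVec_mulVec]
      have hcontr : ∑ i, |(E 1).mulVec ((E (m : ℝ)).mulVec v) i|
          ≤ (1 - n * δ) * ∑ i, |(E (m : ℝ)).mulVec v i| :=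
        contract hδle (hEcol 1) _ (hg0 (m : ℝ))
      have : g ((m + 1 : ℕ) : ℝ) ≤ r * g (m : ℝ) := by
        rw [hgm, hg, hr]; exact hcontr
      calc g ((m + 1 : ℕ) : ℝ) ≤ r * g (m : ℝ) := this
        _ ≤ r * (r ^ m * g 0) := mul_le_mul_of_nonneg_left ih hr0
        _ = r ^ (m + 1) * g 0 := by ring
  -- decay along reals
  have step_real : ∀ t : ℝ, 0 ≤ t → g t ≤ r ^ (Nat.floor t) * g 0 := by
    intro t ht
    set s : ℝ := t - (Nat.floor t : ℝ) with hs
    have hs0 : 0 ≤ s := sub_nonneg.mpr (Nat.floor_le ht)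
    have hts : t = s + (Nat.floor t : ℝ) := by rw [hs]; ring
    have hEt : E t = E s * E ((Nat.floor t : ℝ)) := by rw [← hsem, ← hts]
    have h1 : g t = ∑ i, |(E s).mulVec ((E ((Nat.floor t : ℝ))).mulVec v) i| := by
      rw [hg]; simp only [hEt, Matrix.mulVec_mulVec]
    have h2 : ∑ i, |(E s).mulVec ((E ((Nat.floor t : ℝ))).mulVec v) i|
        ≤ (1 - n * 0) * ∑ i, |(E ((Nat.floor t : ℝ))).mulVec v i| :=
      contract (fun i j => hEnn s hs0 i j) (hEcol s) _ (hg0 _)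
    have h3 : g t ≤ g ((Nat.floor t : ℝ)) := by
      rw [h1, hg]
      simpa using h2
    exact h3.trans (step_nat (Nat.floor t))
  -- assemble the limit
  rw [tendsto_pi_nhds]
  intro i
  have hdecomp : ∀ t : ℝ, (E t).mulVec u₀ = (E t).mulVec v + k := by
    intro t
    have hu : u₀ = v + k := by funext p; simp [hv]
    rw [hu, Matrix.mulVec_add, hEk t]
  have hbound : Filter.Tendsto (fun t : ℝ => (E t).mulVec v i) Filter.atTop (nhds 0) := by
    have hb : ∀ᶠ t : ℝ in Filter.atTop, ‖(E t).mulVec v i‖ ≤ r ^ (Nat.floor t) * g 0 := by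
      filter_upwards [Filter.eventually_ge_atTop (0 : ℝ)] with t ht
      have h1 : |(E t).mulVec v i| ≤ g t :=
        Finset.single_le_sum (f := fun p => |(E t).mulVec v p|)
          (fun p _ => abs_nonneg _) (Finset.mem_univ i)
      exact h1.trans (step_real t ht)
    have hlim : Filter.Tendsto (fun t : ℝ => r ^ (Nat.floor t) * g 0)
        Filter.atTop (nhds 0) := by
      have h1 : Filter.Tendsto (fun m : ℕ => r ^ m) Filter.atTop (nhds 0) :=
        tendsto_pow_atTop_nhds_zero_of_lt_one hr0 hr1
      have h2 : Filter.Tendsto (fun t : ℝ => Nat.floor t) Filter.atTop Filter.atTop :=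
        tendsto_nat_floor_atTop
      have := (h1.comp h2).mul_const (g 0)
      simpa using this
    exact squeeze_zero_norm' hb hlim
  have : Filter.Tendsto (fun t : ℝ => (E t).mulVec v i + k i) Filter.atTop (nhds (0 + k i)) :=
    hbound.add tendsto_const_nhds
  rw [zero_add] at this
  refine this.congr fun t => ?_
  exact (congrFun (hdecomp t) i).symm
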